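/- Let h : E → F be a tight homomorphism of semilattices with zero. Then the dual map ĥ : F̂_tight → Ê_tight, ĥ(ψ) = ψ ∘ h, is surjective if and only if h is tightly injective. -/

import Mathlib

set_option linter.unusedSectionVars false
set_option maxHeartbeats 1000000


/-- A finite subset `C` is a cover for `f`: every `c ∈ C` satisfies `c ≤ f` and every
nonzero `g ≤ f` meets some `c ∈ C`. -/
def IsCover {E : Type*} [SemilatticeInf E] [OrderBot E] (C : Finset E) (f : E) : Prop :=
  (∀ c ∈ C, c ≤ f) ∧ ∀ g : E, g ≠ ⊥ → g ≤ f → ∃ c ∈ C, g ⊓ c ≠ ⊥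

/-- The (finite) family `{v i : i ∈ C}` is a cover for `f`. -/
def IsCoverFam {ι : Type*} {E : Type*} [SemilatticeInf E] [OrderBot E]
    (C : Finset ι) (v : ι → E) (f : E) : Prop :=
  (∀ i ∈ C, v i ≤ f) ∧ ∀ g : E, g ≠ ⊥ → g ≤ f → ∃ i ∈ C, g ⊓ v i ≠ ⊥

/-- A character on a semilattice with zero: a multiplicative `{0,1}`-valued map sending
`0` to `0` and not identically zero. -/
def IsChar {E : Type*} [SemilatticeInf E] [OrderBot E] (φ : E → Bool) : Prop :=
  φ ⊥ = false ∧ (∀ e f : E, φ (e ⊓ f) = (φ e && φ f)) ∧ ∃ e : E, φ e = true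

/-- A tight character: a character such that, for every `f` and every cover `C` for `f`,
`φ f = max_{c ∈ C} φ c`. -/
def IsTightChar {E : Type*} [SemilatticeInf E] [OrderBot E] (φ : E → Bool) : Prop :=
  IsChar φ ∧ ∀ f : E, ∀ C : Finset E, IsCover C f → (φ f = true ↔ ∃ c ∈ C, φ c = true)

/-- A filter on a semilattice with zero. -/
def IsFilterOn {E : Type*} [SemilatticeInf E] [OrderBot E] (ξ : Set E) : Prop :=
  ξ.Nonempty ∧ ⊥ ∉ ξ ∧ (∀ e ∈ ξ, ∀ f ∈ ξ, e ⊓ f ∈ ξ) ∧ ∀ e ∈ ξ, ∀ f : E, e ≤ f → f ∈ ξ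

/-- A tight filter: whenever `C` is a cover for some `f ∈ ξ`, some element of `C` lies in `ξ`. -/
def IsTightFilter {E : Type*} [SemilatticeInf E] [OrderBot E] (ξ : Set E) : Prop :=
  IsFilterOn ξ ∧ ∀ f ∈ ξ, ∀ C : Finset E, IsCover C f → ∃ c ∈ C, c ∈ ξ

/-- The tight order: `e` is tightly below `f` iff there is no nonzero `g ≤ e` with `g ⊓ f = ⊥`. -/
def TightBelow {E : Type*} [SemilatticeInf E] [OrderBot E] (e f : E) : Prop :=
  ¬ ∃ g : E, g ≠ ⊥ ∧ g ≤ e ∧ g ⊓ f = ⊥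

/-- Tight equivalence. -/
def TightEquiv {E : Type*} [SemilatticeInf E] [OrderBot E] (e f : E) : Prop :=
  TightBelow e f ∧ TightBelow f e

/-- A homomorphism is tightly injective if it reflects tight equivalence. -/
def TightlyInjective {E F : Type*} [SemilatticeInf E] [OrderBot E] [SemilatticeInf F] [OrderBot F]
    (h : E → F) : Prop :=
  ∀ e₁ e₂ : E, TightEquiv (h e₁) (h e₂) → TightEquiv e₁ e₂

/-- A homomorphism is tightly surjective if its range is a large subset of the codomain:
for every `f` there is a finite `C ⊆ E` with `h e ≼ f` for all `e ∈ C` and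
`{f ⊓ h e : e ∈ C}` a cover for `f`. -/
def TightlySurjective {E F : Type*} [SemilatticeInf E] [OrderBot E] [SemilatticeInf F] [OrderBot F]
    (h : E → F) : Prop :=
  ∀ f : F, ∃ C : Finset E, (∀ e ∈ C, TightBelow (h e) f) ∧ IsCoverFam C (fun e => f ⊓ h e) f

/-- A homomorphism of semilattices with zero is tight if it satisfies conditions
(4.1.ii) and (4.3.ii) of the paper. -/
def IsTightHom {E F : Type*} [SemilatticeInf E] [OrderBot E] [SemilatticeInf F] [OrderBot F]
    (h : E → F) : Prop :=
  (∀ f : F, ∃ C : Finset E, IsCoverFam C (fun e => f ⊓ h e) f) ∧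
  (∀ e : E, ∀ C : Finset E, IsCover C e → IsCoverFam C h (h e))

section Aux

variable {E : Type*} [SemilatticeInf E] [OrderBot E]

lemma char_le {φ : E → Bool} (hmul : ∀ a b : E, φ (a ⊓ b) = (φ a && φ b))
    {a b : E} (hab : a ≤ b) (ha : φ a = true) : φ b = true := by
  have h2 := hmul a b
  rw [inf_eq_left.2 hab, ha] at h2
  simpa using h2.symm

lemma exists_maximal_filterOn (x : E) (hx : x ≠ ⊥) :
    ∃ ξ : Set E, IsFilterOn ξ ∧ x ∈ ξ ∧ ∀ ξ' : Set E, IsFilterOn ξ' → ξ ⊆ ξ' → ξ' ⊆ ξ := by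
  obtain ⟨m, hxm, hm⟩ := zorn_subset_nonempty {ξ : Set E | IsFilterOn ξ}
    (fun c hc hchain hcne => by
      refine ⟨⋃₀ c, ⟨?_, ?_, ?_, ?_⟩, fun s hs => Set.subset_sUnion_of_mem hs⟩
      · obtain ⟨ξ, hξ⟩ := hcne
        obtain ⟨y, hy⟩ := (hc hξ).1
        exact ⟨y, ξ, hξ, hy⟩
      · rintro ⟨ξ, hξc, hbot⟩
        exact (hc hξc).2.1 hbot
      · rintro e ⟨ξ₁, h1, he⟩ f ⟨ξ₂, h2, hf⟩
        rcases hchain.total h1 h2 with h12 | h21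
        · exact ⟨ξ₂, h2, (hc h2).2.2.1 e (h12 he) f hf⟩
        · exact ⟨ξ₁, h1, (hc h1).2.2.1 e he f (h21 hf)⟩
      · rintro e ⟨ξ₁, h1, he⟩ f hef
        exact ⟨ξ₁, h1, (hc h1).2.2.2 e he f hef⟩)
    {y | x ≤ y}
    (by
      refine ⟨⟨x, le_refl x⟩, ?_, ?_, ?_⟩
      · intro hb; exact hx (le_bot_iff.mp hb)
      · intro e he f hf; exact le_inf he hf
      · intro e he f hef; exact le_trans he hef)
  exact ⟨m, hm.1, hxm (le_refl x), fun ξ' hξ' hsub => hm.2 hξ' hsub⟩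

lemma maximal_filterOn_tight {ξ : Set E} (hξ : IsFilterOn ξ)
    (hmax : ∀ ξ' : Set E, IsFilterOn ξ' → ξ ⊆ ξ' → ξ' ⊆ ξ) : IsTightFilter ξ := by
  refine ⟨hξ, ?_⟩
  intro f hf C hC
  by_contra hno
  push_neg at hno
  have key : ∀ c ∈ C, ∃ x ∈ ξ, x ⊓ c = ⊥ := by
    intro c hc
    by_contra hk
    push_neg at hk
    have hfil : IsFilterOn {z : E | ∃ x ∈ ξ, x ⊓ c ≤ z} := by
      refine ⟨⟨c, f, hf, inf_le_right⟩, ?_, ?_, ?_⟩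
      · rintro ⟨x, hxξ, hxc⟩
        exact hk x hxξ (le_bot_iff.mp hxc)
      · rintro e ⟨x₁, hx1, h1⟩ g ⟨x₂, hx2, h2⟩
        exact ⟨x₁ ⊓ x₂, hξ.2.2.1 x₁ hx1 x₂ hx2,
          le_inf (le_trans (inf_le_inf_right c inf_le_left) h1)
                 (le_trans (inf_le_inf_right c inf_le_right) h2)⟩
      · rintro e ⟨x, hx, hxc⟩ g heg
        exact ⟨x, hx, le_trans hxc heg⟩
    have hsub : ξ ⊆ {z : E | ∃ x ∈ ξ, x ⊓ c ≤ z} := fun y hy => ⟨y, hy, inf_le_left⟩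
    exact hno c hc (hmax _ hfil hsub ⟨f, hf, inf_le_right⟩)
  classical
  have sim : ∀ D : Finset E, (∀ c ∈ D, c ∈ C) → ∃ x ∈ ξ, x ≤ f ∧ ∀ c ∈ D, x ⊓ c = ⊥ := by
    intro D
    induction D using Finset.induction_on with
    | empty => intro _; exact ⟨f, hf, le_refl f, by simp⟩
    | insert _ _ hna =>
      rename_i a D ih
      intro hD
      obtain ⟨x, hxξ, hxf, hx⟩ := ih (fun c hc => hD c (Finset.mem_insert_of_mem hc))
      obtain ⟨xa, hxaξ, hxa⟩ := key a (hD a (Finset.mem_insert_self a D))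
      refine ⟨x ⊓ xa, hξ.2.2.1 x hxξ xa hxaξ, le_trans inf_le_left hxf, ?_⟩
      intro c hc
      rcases Finset.mem_insert.mp hc with rfl | hc'
      · exact le_bot_iff.mp (le_trans (inf_le_inf_right c inf_le_right) hxa.le)
      · exact le_bot_iff.mp (le_trans (inf_le_inf_right c inf_le_left) (hx c hc').le)
  obtain ⟨x, hxξ, hxf, hx⟩ := sim C (fun c hc => hc)
  have hxb : x ≠ ⊥ := fun hb => hξ.2.1 (hb ▸ hxξ)
  obtain ⟨c, hcC, hcne⟩ := hC.2 x hxb hxf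
  exact hcne (hx c hcC)

open Classical in
noncomputable def charOf (ξ : Set E) : E → Bool := fun e => if e ∈ ξ then true else false

lemma charOf_eq_true {ξ : Set E} {e : E} : charOf ξ e = true ↔ e ∈ ξ := by
  simp [charOf]

lemma tightChar_charOf {ξ : Set E} (hξ : IsTightFilter ξ) : IsTightChar (charOf ξ) := by
  obtain ⟨⟨⟨w, hw⟩, hbot, hmeet, hup⟩, htight⟩ := hξ
  refine ⟨⟨?_, ?_, ⟨w, charOf_eq_true.2 hw⟩⟩, ?_⟩
  · simp [charOf, hbot]
  · intro e f
    by_cases hef : e ⊓ f ∈ ξ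
    · have he := hup _ hef e inf_le_left
      have hf := hup _ hef f inf_le_right
      simp [charOf, he, hf, hef]
    · have hnn : ¬(e ∈ ξ ∧ f ∈ ξ) := fun ⟨he, hf⟩ => hef (hmeet e he f hf)
      by_cases he : e ∈ ξ <;> by_cases hf : f ∈ ξ <;>
        simp [charOf, he, hf, hef] <;> exact hnn ⟨he, hf⟩
  · intro f C hC
    constructor
    · intro hft
      obtain ⟨c, hcC, hcξ⟩ := htight f (charOf_eq_true.mp hft) C hC
      exact ⟨c, hcC, charOf_eq_true.2 hcξ⟩
    · rintro ⟨c, hcC, hct⟩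
      exact charOf_eq_true.2 (hup c (charOf_eq_true.mp hct) f (hC.1 c hcC))

lemma exists_tightChar_of_ne_bot (x : E) (hx : x ≠ ⊥) :
    ∃ φ : E → Bool, IsTightChar φ ∧ φ x = true := by
  obtain ⟨ξ, hξ, hxξ, hmax⟩ := exists_maximal_filterOn x hx
  exact ⟨charOf ξ, tightChar_charOf (maximal_filterOn_tight hξ hmax), charOf_eq_true.2 hxξ⟩

lemma tightChar_tightBelow {φ : E → Bool} (hφ : IsTightChar φ) {a b : E}
    (hab : TightBelow a b) (ha : φ a = true) : φ b = true := by
  have hcov : IsCover {a ⊓ b} a := by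
    refine ⟨?_, ?_⟩
    · intro c hc
      rw [Finset.mem_singleton] at hc
      exact hc ▸ inf_le_left
    · intro g hg hga
      refine ⟨a ⊓ b, Finset.mem_singleton_self _, fun hz => ?_⟩
      have he : g ⊓ (a ⊓ b) = g ⊓ b := by rw [← inf_assoc, inf_eq_left.2 hga]
      exact hab ⟨g, hg, hga, he ▸ hz⟩
  obtain ⟨c, hcC, hct⟩ := (hφ.2 a {a ⊓ b} hcov).mp ha
  rw [Finset.mem_singleton] at hcC
  subst hcC
  rw [hφ.1.2.1 a b] at hct
  exact (Bool.and_eq_true _ _).mp hct |>.2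

end Aux

theorem dualMap_surjective_iff_tightlyInjective' {E F : Type*} [SemilatticeInf E] [OrderBot E]
    [SemilatticeInf F] [OrderBot F]
    (h : E → F) (h0 : h ⊥ = ⊥) (hinf : ∀ a b : E, h (a ⊓ b) = h a ⊓ h b) :
    (∀ φ : E → Bool, IsTightChar φ →
      ∃ ψ : F → Bool, IsTightChar ψ ∧ (fun e => ψ (h e)) = φ) ↔
    (∀ e₁ e₂ : E, (TightBelow (h e₁) (h e₂) ∧ TightBelow (h e₂) (h e₁)) →
      (TightBelow e₁ e₂ ∧ TightBelow e₂ e₁)) := by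
  constructor
  · intro hsurj e₁ e₂ heq
    have main : ∀ a b : E, TightBelow (h a) (h b) → TightBelow (h b) (h a) → TightBelow a b := by
      intro a b hab hba
      by_contra hnb
      obtain ⟨g, hg, hga, hgb⟩ := not_not.mp hnb
      obtain ⟨φ, hφ, hφg⟩ := exists_tightChar_of_ne_bot g hg
      obtain ⟨ψ, hψ, hψh⟩ := hsurj φ hφ
      have hφa : φ a = true := char_le hφ.1.2.1 hga hφg
      have hφb : φ b = false := by
        cases hb : φ b with
        | false => rfl
        | true =>
          have hm := hφ.1.2.1 g b
          rw [hgb, hφ.1.1, hφg, hb] at hm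
          simp at hm
      have h1 : ψ (h a) = true := by
        have := congrFun hψh a
        rw [this, hφa]
      have h2 : ψ (h b) = true := tightChar_tightBelow hψ hab h1
      have h3 := congrFun hψh b
      rw [h2, hφb] at h3
      exact absurd h3 (by simp)
    exact ⟨main e₁ e₂ heq.1 heq.2, main e₂ e₁ heq.2 heq.1⟩
  · intro hinj φ hφ
    classical
    have hne_of : ∀ g : E, g ≠ ⊥ → h g ≠ ⊥ := by
      intro g hg hgb
      have hbb : TightBelow (⊥ : F) (⊥ : F) := by
        rintro ⟨g', hg', hg'le, -⟩
        exact hg' (le_bot_iff.mp hg'le)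
      have := (hinj g ⊥ (by rw [hgb, h0]; exact ⟨hbb, hbb⟩)).1
      exact this ⟨g, hg, le_refl g, inf_bot_eq g⟩
    -- finitary approximants
    have approx : ∀ S : Finset E, ∃ ψ : F → Bool, IsTightChar ψ ∧ ∀ e ∈ S, ψ (h e) = φ e := by
      intro S
      obtain ⟨⟨hbot, hmul, ⟨ew, hew⟩⟩, htight⟩ := hφ
      have hinfS : ∃ eP : E, φ eP = true ∧ ∀ e ∈ S, φ e = true → eP ≤ e := by
        induction S using Finset.induction_on with
        | empty => exact ⟨ew, hew, by simp⟩
        | insert _ _ hna =>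
          rename_i a s ih
          obtain ⟨eP, hP, hle⟩ := ih
          by_cases hfa : φ a = true
          · refine ⟨eP ⊓ a, by rw [hmul, hP, hfa]; rfl, ?_⟩
            intro e he hfe
            rcases Finset.mem_insert.mp he with rfl | he'
            · exact inf_le_right
            · exact le_trans inf_le_left (hle e he' hfe)
          · refine ⟨eP, hP, ?_⟩
            intro e he hfe
            rcases Finset.mem_insert.mp he with rfl | he'
            · exact absurd hfe hfa
            · exact hle e he' hfe
      obtain ⟨eP, hP, hle⟩ := hinfS
      have hg : ∃ g : E, g ≠ ⊥ ∧ g ≤ eP ∧ ∀ e ∈ S, φ e = false → g ⊓ e = ⊥ := by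
        by_contra hcon
        push_neg at hcon
        set C : Finset E := (S.filter (fun e => φ e = false)).image (fun e => eP ⊓ e) with hCdef
        have hcov : IsCover C eP := by
          constructor
          · intro c hc
            obtain ⟨e, -, rfl⟩ := Finset.mem_image.mp hc
            exact inf_le_left
          · intro g hgne hgle
            obtain ⟨e, heS, hef, hne⟩ := hcon g hgne hgle
            refine ⟨eP ⊓ e, Finset.mem_image.mpr ⟨e, Finset.mem_filter.mpr ⟨heS, hef⟩, rfl⟩, ?_⟩
            have : g ⊓ (eP ⊓ e) = g ⊓ e := by rw [← inf_assoc, inf_eq_left.2 hgle]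
            rw [this]; exact hne
        obtain ⟨c, hcC, hc1⟩ := (htight eP C hcov).mp hP
        obtain ⟨e, heS, rfl⟩ := Finset.mem_image.mp hcC
        have h1 : φ e = true := char_le hmul inf_le_right hc1
        have h2 := (Finset.mem_filter.mp heS).2
        rw [h1] at h2
        exact absurd h2 (by simp)
      obtain ⟨g, hgne, hgP, hg0⟩ := hg
      obtain ⟨η, hη, hmem, hmax⟩ := exists_maximal_filterOn (h g) (hne_of g hgne)
      have hηt := maximal_filterOn_tight hη hmax
      refine ⟨charOf η, tightChar_charOf hηt, ?_⟩
      intro e heS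
      cases hfe : φ e with
      | true =>
        have hge : g ≤ e := le_trans hgP (hle e heS hfe)
        have : h g ≤ h e := by
          rw [← inf_eq_left.2 hge, hinf]
          exact inf_le_right
        exact charOf_eq_true.2 (hη.2.2.2 (h g) hmem (h e) this)
      | false =>
        by_contra hcc
        have hct : charOf η (h e) = true := by
          cases hcc' : charOf η (h e) with
          | true => rfl
          | false => exact absurd hcc' hcc
        have hheη : h e ∈ η := charOf_eq_true.mp hct
        have : h g ⊓ h e ∈ η := hη.2.2.1 (h g) hmem (h e) hheη
        rw [← hinf, hg0 e heS hfe, h0] at this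
        exact hη.2.1 this
    choose ψS hψS hψSφ using approx
    haveI : Nonempty (Finset E) := ⟨∅⟩
    let U : Ultrafilter (Finset E) := Ultrafilter.of Filter.atTop
    have hU : ∀ S : Finset E, {T : Finset E | S ≤ T} ∈ U :=
      fun S => Filter.le_def.mp (Ultrafilter.of_le Filter.atTop) _ (Filter.mem_atTop S)
    set Ψ : F → Bool := fun f => if {T : Finset E | ψS T f = true} ∈ U then true else false
      with hΨdef
    have hΨpt : ∀ f : F, {T : Finset E | ψS T f = Ψ f} ∈ U := by
      intro f
      by_cases hA : {T : Finset E | ψS T f = true} ∈ U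
      · have : Ψ f = true := by rw [hΨdef]; simp [hA]
        rw [this]; exact hA
      · have hΨf : Ψ f = false := by rw [hΨdef]; simp [hA]
        rw [hΨf]
        have := Ultrafilter.compl_mem_iff_notMem.mpr hA
        refine Filter.mem_of_superset this ?_
        intro T hT
        simp only [Set.mem_compl_iff, Set.mem_setOf_eq] at hT ⊢
        exact Bool.not_eq_true _ ▸ (by simpa using hT)
    have hagree : ∀ t : Finset F, {T : Finset E | ∀ f ∈ t, ψS T f = Ψ f} ∈ U := by
      intro t
      induction t using Finset.induction_on with
      | empty => refine Filter.mem_of_superset Filter.univ_mem ?_; intro T _; simp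
      | insert _ _ hna =>
        rename_i a t ih
        refine Filter.mem_of_superset (Filter.inter_mem (hΨpt a) ih) ?_
        rintro T ⟨hT1, hT2⟩ f hf
        rcases Finset.mem_insert.mp hf with rfl | hf'
        · exact hT1
        · exact hT2 f hf'
    have hΨhe : ∀ e : E, Ψ (h e) = φ e := by
      intro e
      have hB : {T : Finset E | ψS T (h e) = φ e} ∈ U := by
        refine Filter.mem_of_superset (hU {e}) ?_
        intro T hT
        exact hψSφ T e (Finset.singleton_subset_iff.mp hT)
      obtain ⟨T, hT1, hT2⟩ := Filter.nonempty_of_mem (Filter.inter_mem hB (hΨpt (h e)))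
      rw [← hT2, hT1]
    refine ⟨Ψ, ⟨⟨?_, ?_, ?_⟩, ?_⟩, funext hΨhe⟩
    · obtain ⟨T, hT⟩ := Filter.nonempty_of_mem (hΨpt (⊥ : F))
      rw [← hT, (hψS T).1.1]
    · intro a b
      obtain ⟨T, hT⟩ := Filter.nonempty_of_mem (hagree {a ⊓ b, a, b})
      have h1 := hT (a ⊓ b) (by simp)
      have h2 := hT a (by simp)
      have h3 := hT b (by simp)
      rw [← h1, ← h2, ← h3, (hψS T).1.2.1]
    · obtain ⟨ew, hew⟩ := hφ.1.2.2
      exact ⟨h ew, by rw [hΨhe ew]; exact hew⟩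
    · intro f C hC
      obtain ⟨T, hT⟩ := Filter.nonempty_of_mem (hagree (insert f C))
      have h1 := hT f (Finset.mem_insert_self f C)
      constructor
      · intro hΨf
        rw [← h1] at hΨf
        obtain ⟨c, hcC, hct⟩ := ((hψS T).2 f C hC).mp hΨf
        refine ⟨c, hcC, ?_⟩
        rw [← hT c (Finset.mem_insert_of_mem hcC)]
        exact hct
      · rintro ⟨c, hcC, hct⟩
        rw [← hT c (Finset.mem_insert_of_mem hcC)] at hct
        rw [← h1]
        exact ((hψS T).2 f C hC).mpr ⟨c, hcC, hct⟩


/-- If `h : E → F` is a tight homomorphism of semilattices with zero,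
then the dual map `ĥ : F̂_tight → Ê_tight`, `ĥ ψ = ψ ∘ h`, is surjective if and only if
`h` is tightly injective. -/
theorem dualMap_surjective_iff_tightlyInjective {E F : Type*} [SemilatticeInf E] [OrderBot E]
    [SemilatticeInf F] [OrderBot F]
    (h : E → F) (h0 : h ⊥ = ⊥) (hinf : ∀ a b : E, h (a ⊓ b) = h a ⊓ h b)
    (ht : IsTightHom h) :
    (∀ φ : E → Bool, IsTightChar φ →
      ∃ ψ : F → Bool, IsTightChar ψ ∧ (fun e => ψ (h e)) = φ) ↔
    TightlyInjective h := by
  exact dualMap_surjective_iff_tightlyInjective' h h0 hinf
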